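/- If f : ℝⁿ → ℝ ∪ {+∞} is a proper nearly convex function (proper: dom f ≠ ∅ and f > -∞ everywhere; nearly convex: epi f is a nearly convex set), then its lower semicontinuous hull f̄ is a proper convex function. -/
import Mathlib

def NearlyConvex {E : Type*} [AddCommMonoid E] [Module ℝ E] [TopologicalSpace E]
    (Ω : Set E) : Prop :=
  ∃ C : Set E, Convex ℝ C ∧ C ⊆ Ω ∧ Ω ⊆ closure C

def epigraph {E : Type*} (f : E → EReal) : Set (E × ℝ) :=
  {p | f p.1 ≤ (p.2 : EReal)}

noncomputable def lscHull {E : Type*} [TopologicalSpace E] (f : E → EReal) : E → EReal :=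
  fun x => sInf ((fun α : ℝ => (α : EReal)) '' {α : ℝ | (x, α) ∈ closure (epigraph f)})

open Set

section Key

variable {E : Type*} [NormedAddCommGroup E] [NormedSpace ℝ E] [FiniteDimensional ℝ E]

lemma key_zero {C : Set E} (hC : Convex ℝ C) (h0 : (0:E) ∈ C) :
    ∃ p ∈ C, ∀ q ∈ closure C, midpoint ℝ p q ∈ C := by
  set V := Submodule.span ℝ C with hV
  have hCV : C ⊆ (V : Set E) := Submodule.subset_span
  set C' : Set V := (Subtype.val : V → E) ⁻¹' C with hC'
  have hC'conv : Convex ℝ C' := hC.linear_preimage V.subtype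
  have h0' : (0 : V) ∈ C' := by
    show ((0 : V) : E) ∈ C
    simpa using h0
  have hspan : Submodule.span ℝ C' = ⊤ := by
    have h1 : Submodule.span ℝ (⇑V.subtype ⁻¹' C) = (Submodule.span ℝ C).comap V.subtype :=
      Submodule.span_preimage_eq ⟨0, h0⟩
        (by rw [Submodule.range_subtype]; exact hCV)
    have h2 : C' = ⇑V.subtype ⁻¹' C := rfl
    rw [h2, h1, ← hV]
    exact Submodule.comap_subtype_self V
  have haff : affineSpan ℝ C' = ⊤ := by
    rw [AffineSubspace.affineSpan_eq_top_iff_vectorSpan_eq_top_of_nonempty ℝ V V ⟨0, h0'⟩]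
    rw [eq_top_iff, ← hspan, vectorSpan_def]
    apply Submodule.span_mono
    intro x hx
    exact ⟨x, hx, 0, h0', by simp⟩
  obtain ⟨p', hp'⟩ := hC'conv.interior_nonempty_iff_affineSpan_eq_top.2 haff
  refine ⟨(p' : E), interior_subset (s := C') hp', ?_⟩
  intro q hq
  have hqV : q ∈ V := by
    have hcl : closure C ⊆ (V : Set E) :=
      closure_minimal hCV V.closed_of_finiteDimensional
    exact hcl hq
  set q' : V := ⟨q, hqV⟩ with hq'def
  have hiso : Isometry (Subtype.val : V → E) := fun x y => rfl
  have hq' : q' ∈ closure C' := by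
    rw [hiso.isUniformInducing.isInducing.closure_eq_preimage_closure_image C']
    show (q : E) ∈ closure (Subtype.val '' C')
    have himg : Subtype.val '' C' = C := by
      rw [hC', Set.image_preimage_eq_inter_range, Subtype.range_val]
      exact inter_eq_self_of_subset_left hCV
    rw [himg]
    exact hq
  have hmid : midpoint ℝ p' q' ∈ interior C' := by
    rcases eq_or_ne p' q' with h | h
    · simpa [h] using hp'
    · apply hC'conv.openSegment_interior_closure_subset_interior hp' hq'
      refine ⟨1/2, 1/2, by norm_num, by norm_num, by norm_num, ?_⟩
      rw [midpoint_eq_smul_add, invOf_eq_inv, smul_add]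
      norm_num
  have hmem : midpoint ℝ p' q' ∈ C' := interior_subset hmid
  have hcoe : (↑(midpoint ℝ p' q') : E) = midpoint ℝ (p' : E) q :=
    (V.subtype.toAffineMap).map_midpoint p' q'
  show midpoint ℝ (p' : E) q ∈ C
  rw [← hcoe]
  exact hmem

lemma key {C : Set E} (hC : Convex ℝ C) (hne : C.Nonempty) :
    ∃ p ∈ C, ∀ q ∈ closure C, midpoint ℝ p q ∈ C := by
  obtain ⟨c, hc⟩ := hne
  set D := (fun x => -c + x) '' C with hD
  have hDconv : Convex ℝ D := hC.translate (-c)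
  have h0D : (0:E) ∈ D := ⟨c, hc, by simp⟩
  obtain ⟨p, hpD, hp⟩ := key_zero hDconv h0D
  obtain ⟨p₀, hp₀, rfl⟩ := hpD
  refine ⟨p₀, hp₀, fun q hq => ?_⟩
  have hqD : -c + q ∈ closure D := by
    have hDeq : D = (Homeomorph.addLeft (-c)) '' C := rfl
    rw [hDeq, ← Homeomorph.image_closure]
    exact ⟨q, hq, rfl⟩
  have hmem := hp _ hqD
  have hmid : midpoint ℝ (-c + p₀) (-c + q) = -c + midpoint ℝ p₀ q :=
    ((AffineEquiv.constVAdd ℝ E (-c)).map_midpoint p₀ q).symm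
  rw [hmid] at hmem
  obtain ⟨w, hw, hweq⟩ := hmem
  have hwq : w = midpoint ℝ p₀ q := by
    have := add_left_cancel hweq
    exact this
  rwa [← hwq]

omit [FiniteDimensional ℝ E] in
lemma midpoint_prod {F : Type*} [NormedAddCommGroup F] [NormedSpace ℝ F]
    (a c : E) (b d : F) :
    midpoint ℝ ((a, b) : E × F) (c, d) = (midpoint ℝ a c, midpoint ℝ b d) := by
  rw [midpoint_eq_smul_add, midpoint_eq_smul_add, midpoint_eq_smul_add,
    Prod.mk_add_mk, Prod.smul_mk]

end Key

theorem lscHull_proper_convex {n : ℕ}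
    (f : EuclideanSpace ℝ (Fin n) → EReal)
    (hbot : ∀ x, f x ≠ ⊥) (hdom : ∃ x, f x ≠ ⊤)
    (hnc : NearlyConvex (epigraph f)) :
    (∀ x, lscHull f x ≠ ⊥) ∧ (∃ x, lscHull f x ≠ ⊤) ∧
      Convex ℝ (epigraph (lscHull f)) := by
  obtain ⟨C, hCconv, hCsub, hsubC⟩ := hnc
  obtain ⟨x₀, hx₀⟩ := hdom
  obtain ⟨r₀, hr₀⟩ : ∃ r : ℝ, f x₀ = (r : EReal) :=
    ⟨(f x₀).toReal, (EReal.coe_toReal hx₀ (hbot x₀)).symm⟩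
  have hepi₀ : ((x₀, r₀) : EuclideanSpace ℝ (Fin n) × ℝ) ∈ epigraph f := by simp [epigraph, hr₀]
  have hCne : C.Nonempty := by
    rw [← closure_nonempty_iff]
    exact ⟨_, hsubC hepi₀⟩
  have hKeq : closure (epigraph f) = closure C :=
    Subset.antisymm (closure_minimal hsubC isClosed_closure) (closure_mono hCsub)
  have hKconv : Convex ℝ (closure (epigraph f)) := by
    rw [hKeq]; exact hCconv.closure
  -- upward closedness of the closure of the epigraph
  have hup : ∀ (x : EuclideanSpace ℝ (Fin n)) (α β : ℝ), α ≤ β → (x, α) ∈ closure (epigraph f) →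
      (x, β) ∈ closure (epigraph f) := by
    intro x α β hab h
    have hcont : Continuous (fun p : EuclideanSpace ℝ (Fin n) × ℝ => (p.1, p.2 + (β - α))) := by fun_prop
    have himg : (fun p : EuclideanSpace ℝ (Fin n) × ℝ => (p.1, p.2 + (β - α))) '' epigraph f ⊆ epigraph f := by
      rintro _ ⟨p, hp, rfl⟩
      show f p.1 ≤ ((p.2 + (β - α) : ℝ) : EReal)
      refine le_trans hp ?_
      exact_mod_cast le_add_of_nonneg_right (by linarith)
    have h1 : ((x, α + (β - α)) : EuclideanSpace ℝ (Fin n) × ℝ) ∈ closure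
        ((fun p : EuclideanSpace ℝ (Fin n) × ℝ => (p.1, p.2 + (β - α))) '' epigraph f) :=
      image_closure_subset_closure_image hcont ⟨(x, α), h, rfl⟩
    have h2 := closure_mono himg h1
    simpa [show α + (β - α) = β by ring] using h2
  have hA : ∀ (x : EuclideanSpace ℝ (Fin n)) (α : ℝ), (x, α) ∈ closure (epigraph f) →
      lscHull f x ≤ (α : EReal) := fun x α h => sInf_le ⟨α, h, rfl⟩
  have hB : ∀ (x : EuclideanSpace ℝ (Fin n)) (α : ℝ), lscHull f x ≤ (α : EReal) →
      (x, α) ∈ closure (epigraph f) := by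
    intro x α h
    set S := {β : ℝ | (x, β) ∈ closure (epigraph f)} with hS
    have hScl : IsClosed S := IsClosed.preimage (by fun_prop : Continuous fun β : ℝ => ((x, β) : EuclideanSpace ℝ (Fin n) × ℝ)) isClosed_closure
    have hSne : S.Nonempty := by
      by_contra hemp
      rw [not_nonempty_iff_eq_empty] at hemp
      have ht : lscHull f x = ⊤ := by
        show sInf ((fun α : ℝ => (α : EReal)) '' S) = ⊤
        rw [hemp]
        simp
      rw [ht] at h
      exact absurd h (by simp)
    by_cases hbd : BddBelow S
    · have hm : sInf S ∈ S := hScl.csInf_mem hSne hbd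
      have hle : ((sInf S : ℝ) : EReal) ≤ (α : EReal) := by
        refine le_trans ?_ h
        refine le_sInf ?_
        rintro _ ⟨β, hβ, rfl⟩
        exact EReal.coe_le_coe_iff.2 (csInf_le hbd hβ)
      exact hup x (sInf S) α (by exact_mod_cast hle) hm
    · obtain ⟨γ, hγS, hγ⟩ : ∃ γ ∈ S, γ < α := by
        by_contra hcon
        push_neg at hcon
        exact hbd ⟨α, fun γ hγ => hcon γ hγ⟩
      exact hup x γ α hγ.le hγS
  obtain ⟨p, hpC, hp⟩ := key hCconv hCne
  obtain ⟨y, β⟩ := p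
  have hnb : ∀ x, lscHull f x ≠ ⊥ := by
    intro x hx
    have hall : ∀ r : ℝ, ((x, r) : EuclideanSpace ℝ (Fin n) × ℝ) ∈ closure (epigraph f) :=
      fun r => hB x r (by rw [hx]; exact bot_le)
    have hfz : ∀ r : ℝ, f (midpoint ℝ y x) ≤ (r : EReal) := by
      intro r
      have hq : ((x, 2*r - β) : EuclideanSpace ℝ (Fin n) × ℝ) ∈ closure C := by
        rw [← hKeq]; exact hall _
      have hm := hp _ hq
      rw [midpoint_prod] at hm
      have hmr : midpoint ℝ β (2*r - β) = r := by
        rw [midpoint_eq_smul_add, invOf_eq_inv, smul_eq_mul]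
        ring
      rw [hmr] at hm
      exact hCsub hm
    have hzb : f (midpoint ℝ y x) = ⊥ := by
      by_contra hne
      rcases eq_or_ne (f (midpoint ℝ y x)) ⊤ with ht | ht
      · have := hfz 0
        rw [ht] at this
        exact absurd this (by simp)
      · have ha : f (midpoint ℝ y x) = ((f (midpoint ℝ y x)).toReal : EReal) :=
          (EReal.coe_toReal ht hne).symm
        have := hfz ((f (midpoint ℝ y x)).toReal - 1)
        rw [ha] at this
        norm_cast at this
        rw [EReal.toReal_coe] at this
        linarith
    exact hbot _ hzb
  have hnt : ∃ x, lscHull f x ≠ ⊤ := by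
    refine ⟨x₀, fun h => ?_⟩
    have := hA x₀ r₀ (subset_closure hepi₀)
    rw [h] at this
    exact (EReal.coe_lt_top r₀).not_ge this
  have hepi_eq : epigraph (lscHull f) = closure (epigraph f) := by
    ext ⟨x, α⟩
    exact ⟨fun h => hB x α h, fun h => hA x α h⟩
  exact ⟨hnb, hnt, by rw [hepi_eq]; exact hKconv⟩
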